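/- The crucial part of a BGP is complete: for any BGP P, set C of completeness statements, and graph G, the entailment C, G ⊨ Compl(cruc(P, C, G)) holds; i.e., for every extension pair (G, G') valid wrt C, the evaluation of the BGP cruc(P, C, G) over G' equals its evaluation over G. -/

import Mathlib

/-- Constants (IRIs/literals) -/
abbrev Const := ℕ
/-- Variables -/
abbrev Var := ℕ

/-- A term is a constant or a variable. -/
inductive Term where
  | c : Const → Term
  | v : Var → Term
deriving DecidableEq

/-- Triple pattern -/
abbrev TP := Term × Term × Term
/-- Basic graph pattern (also used for graphs, as sets of ground triple patterns) -/
abbrev BGP := Set TP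
/-- (Partial) mapping from variables to constants -/
abbrev Mapping := Var → Option Const

def termVars : Term → Set Var
  | .c _ => ∅
  | .v x => {x}

def tpVars (t : TP) : Set Var := termVars t.1 ∪ termVars t.2.1 ∪ termVars t.2.2

def bgpVars (P : BGP) : Set Var := ⋃ t ∈ P, tpVars t

def termConsts : Term → Set Const
  | .c a => {a}
  | .v _ => ∅

def tpConsts (t : TP) : Set Const := termConsts t.1 ∪ termConsts t.2.1 ∪ termConsts t.2.2

def bgpConsts (P : BGP) : Set Const := ⋃ t ∈ P, tpConsts t

/-- A graph is a BGP all of whose triples are ground. -/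
def GroundBGP (P : BGP) : Prop := ∀ t ∈ P, tpVars t = ∅

def applyTerm (μ : Mapping) : Term → Term
  | .c a => .c a
  | .v x =>
    match μ x with
    | some a => .c a
    | none => .v x

def applyTP (μ : Mapping) (t : TP) : TP :=
  (applyTerm μ t.1, applyTerm μ t.2.1, applyTerm μ t.2.2)

def applyBGP (μ : Mapping) (P : BGP) : BGP := applyTP μ '' P

/-- Domain of a mapping -/
def mdom (μ : Mapping) : Set Var := {x | μ x ≠ none}

/-- Evaluation of a BGP over a graph: ⟦P⟧_G = {μ | dom(μ) = var(P), μP ⊆ G}. -/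
def bgpEval (P G : BGP) : Set Mapping := {μ | mdom μ = bgpVars P ∧ applyBGP μ P ⊆ G}

/-- A completeness statement Compl(P_C). -/
structure CS where
  pat : BGP

/-- The CONSTRUCT query associated to a completeness statement. -/
def constructQ (C : CS) (G : BGP) : BGP := ⋃ μ ∈ bgpEval C.pat G, applyBGP μ C.pat

/-- Transfer operator T_𝒞. -/
def transfer (𝒞 : Set CS) (G : BGP) : BGP := ⋃ C ∈ 𝒞, constructQ C G

/-- (G, G') is a valid extension pair wrt 𝒞. -/
def Valid (𝒞 : Set CS) (G G' : BGP) : Prop :=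
  G ⊆ G' ∧ GroundBGP G' ∧ transfer 𝒞 G' ⊆ G

/-- 𝒞, G ⊨ Compl(P). -/
def Entails (𝒞 : Set CS) (G : BGP) (P : BGP) : Prop :=
  ∀ G', Valid 𝒞 G G' → bgpEval P G' = bgpEval P G

def emptyMap : Mapping := fun _ => none

/-- Union of two mappings (left-biased; used on mappings with disjoint domains). -/
def munion (μ ν : Mapping) : Mapping := fun x => (μ x).orElse (fun _ => ν x)

/-- Partially mapped BGP -/
abbrev PMBGP := BGP × Mapping

/-- Evaluation of a partially mapped BGP: ⟦(P, ν)⟧_G = {ν ∪ ρ | ρ ∈ ⟦P⟧_G}. -/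
def evalPM (pm : PMBGP) (G : BGP) : Set Mapping :=
  {σ | ∃ ρ ∈ bgpEval pm.1 G, σ = munion pm.2 ρ}

def evalPMSet (S : Set PMBGP) (G : BGP) : Set Mapping := ⋃ pm ∈ S, evalPM pm G

/-- S ≡_{𝒞,G} S' : equal evaluations over every valid extension pair. -/
def EquivCG (𝒞 : Set CS) (G : BGP) (S S' : Set PMBGP) : Prop :=
  ∀ G', Valid 𝒞 G G' → evalPMSet S G' = evalPMSet S' G'

/-- The freeze mapping, sending each variable to a (fresh) constant. -/
def freezeMap (frz : Var → Const) : Mapping := fun x => some (frz x)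

/-- frz is a genuine freeze mapping: injective and its values are fresh. -/
def Fresh (frz : Var → Const) (𝒞 : Set CS) (G P : BGP) : Prop :=
  Function.Injective frz ∧
    ∀ x, frz x ∉ bgpConsts G ∪ bgpConsts P ∪ ⋃ C ∈ 𝒞, bgpConsts C.pat

/-- Crucial part: cruc(P, 𝒞, G) = P ∩ id̃⁻¹(T_𝒞(P̃ ∪ G)). -/
def cruc (P : BGP) (𝒞 : Set CS) (G : BGP) (frz : Var → Const) : BGP :=
  {t | t ∈ P ∧ applyTP (freezeMap frz) t ∈ transfer 𝒞 (applyBGP (freezeMap frz) P ∪ G)}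

/-- Equivalent partial grounding operator. -/
def epg (pm : PMBGP) (𝒞 : Set CS) (G : BGP) (frz : Var → Const) : Set PMBGP :=
  {q | ∃ μ ∈ bgpEval (cruc pm.1 𝒞 G frz) G, q = (applyBGP μ pm.1, munion pm.2 μ)}

/-- A partially mapped BGP is saturated wrt 𝒞 and G. -/
def Saturated (pm : PMBGP) (𝒞 : Set CS) (G : BGP) (frz : Var → Const) : Prop :=
  epg pm 𝒞 G frz = {pm}

/-- Partially mapped BGPs reachable from (P, ∅) by the saturation algorithm's epg steps. -/
inductive Reach (𝒞 : Set CS) (G : BGP) (frz : Var → Const) (P : BGP) : PMBGP → Prop where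
  | init : Reach 𝒞 G frz P (P, emptyMap)
  | step {pm pm' : PMBGP} : Reach 𝒞 G frz P pm → epg pm 𝒞 G frz ≠ {pm} →
      pm' ∈ epg pm 𝒞 G frz → Reach 𝒞 G frz P pm'

/-- The set Ω of mappings returned by the saturation algorithm sat(P, 𝒞, G). -/
def satSet (𝒞 : Set CS) (G : BGP) (frz : Var → Const) (P : BGP) : Set Mapping :=
  {ν | ∃ P', Reach 𝒞 G frz P (P', ν) ∧ Saturated (P', ν) 𝒞 G frz}


section Aux
variable (frz : Var → Const) (μ : Mapping)

open Classical in
/-- Unfreezing a constant: frozen constants go to the value of `μ`. -/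
noncomputable def unfr (a : Const) : Const :=
  if hx : ∃ x, frz x = a then (μ hx.choose).getD a else a

lemma unfr_frz (hinj : Function.Injective frz) (x : Var) {b : Const} (hb : μ x = some b) :
    unfr frz μ (frz x) = b := by
  unfold unfr
  rw [dif_pos ⟨x, rfl⟩]
  have h := (⟨x, rfl⟩ : ∃ y, frz y = frz x).choose_spec
  rw [hinj h, hb]; rfl

lemma unfr_fix {a : Const} (ha : ∀ x, frz x ≠ a) : unfr frz μ a = a := by
  unfold unfr
  rw [dif_neg (by rintro ⟨x, rfl⟩; exact ha x rfl)]

noncomputable def unfrT : Term → Term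
  | .c a => .c (unfr frz μ a)
  | .v x => .v x

noncomputable def unfrTP (t : TP) : TP :=
  (unfrT frz μ t.1, unfrT frz μ t.2.1, unfrT frz μ t.2.2)

lemma unfrT_freeze (hinj : Function.Injective frz) (w : Term)
    (hv : ∀ x, w = .v x → x ∈ mdom μ)
    (hc : ∀ a, w = .c a → ∀ x, frz x ≠ a) :
    unfrT frz μ (applyTerm (freezeMap frz) w) = applyTerm μ w := by
  cases w with
  | c a => simp [applyTerm, unfrT, unfr_fix frz μ (hc a rfl)]
  | v x =>
    have hx := hv x rfl
    simp only [mdom, Set.mem_setOf_eq] at hx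
    obtain ⟨b, hb⟩ := Option.ne_none_iff_exists'.mp hx
    simp [applyTerm, freezeMap, unfrT, hb, unfr_frz frz μ hinj x hb]

lemma unfrTP_freeze (hinj : Function.Injective frz) (s : TP)
    (hv : tpVars s ⊆ mdom μ)
    (hc : ∀ a ∈ tpConsts s, ∀ x, frz x ≠ a) :
    unfrTP frz μ (applyTP (freezeMap frz) s) = applyTP μ s := by
  obtain ⟨u1, u2, u3⟩ := s
  have h1 := unfrT_freeze frz μ hinj u1
    (fun x hx => hv (by subst hx; simp [tpVars, termVars]))
    (fun a ha x => hc a (by subst ha; simp [tpConsts, termConsts]) x)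
  have h2 := unfrT_freeze frz μ hinj u2
    (fun x hx => hv (by subst hx; simp [tpVars, termVars]))
    (fun a ha x => hc a (by subst ha; simp [tpConsts, termConsts]) x)
  have h3 := unfrT_freeze frz μ hinj u3
    (fun x hx => hv (by subst hx; simp [tpVars, termVars]))
    (fun a ha x => hc a (by subst ha; simp [tpConsts, termConsts]) x)
  simp [unfrTP, applyTP, h1, h2, h3]

lemma unfrT_ground (w : Term) (hgw : termVars w = ∅)
    (hc : ∀ a, w = .c a → ∀ x, frz x ≠ a) : unfrT frz μ w = w := by
  cases w with
  | c a => simp [unfrT, unfr_fix frz μ (hc a rfl)]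
  | v x => simp [termVars] at hgw

lemma unfrTP_ground (s : TP) (hgs : tpVars s = ∅)
    (hc : ∀ a ∈ tpConsts s, ∀ x, frz x ≠ a) : unfrTP frz μ s = s := by
  obtain ⟨u1, u2, u3⟩ := s
  simp only [tpVars, Set.union_empty_iff] at hgs
  have h1 := unfrT_ground frz μ u1 hgs.1.1
    (fun a ha x => hc a (by subst ha; simp [tpConsts, termConsts]) x)
  have h2 := unfrT_ground frz μ u2 hgs.1.2
    (fun a ha x => hc a (by subst ha; simp [tpConsts, termConsts]) x)
  have h3 := unfrT_ground frz μ u3 hgs.2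
    (fun a ha x => hc a (by subst ha; simp [tpConsts, termConsts]) x)
  simp [unfrTP, h1, h2, h3]

lemma unfrT_apply (ν : Mapping) (w : Term)
    (hc : ∀ a, w = .c a → ∀ x, frz x ≠ a) :
    unfrT frz μ (applyTerm ν w) = applyTerm (fun x => (ν x).map (unfr frz μ)) w := by
  cases w with
  | c a => simp [applyTerm, unfrT, unfr_fix frz μ (hc a rfl)]
  | v x => cases hb : ν x <;> simp [applyTerm, unfrT, hb]

lemma unfrTP_apply (ν : Mapping) (w : TP)
    (hc : ∀ a ∈ tpConsts w, ∀ x, frz x ≠ a) :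
    unfrTP frz μ (applyTP ν w) = applyTP (fun x => (ν x).map (unfr frz μ)) w := by
  obtain ⟨u1, u2, u3⟩ := w
  have h1 := unfrT_apply frz μ ν u1
    (fun a ha x => hc a (by subst ha; simp [tpConsts, termConsts]) x)
  have h2 := unfrT_apply frz μ ν u2
    (fun a ha x => hc a (by subst ha; simp [tpConsts, termConsts]) x)
  have h3 := unfrT_apply frz μ ν u3
    (fun a ha x => hc a (by subst ha; simp [tpConsts, termConsts]) x)
  simp [unfrTP, applyTP, h1, h2, h3]

end Aux

/-- The crucial part is complete: 𝒞, G ⊨ Compl(cruc(P, 𝒞, G)). -/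
theorem stmt6 (𝒞 : Set CS) (G : BGP) (frz : Var → Const) (P : BGP)
    (hg : GroundBGP G) (hfresh : Fresh frz 𝒞 G P) :
    Entails 𝒞 G (cruc P 𝒞 G frz) := by
  obtain ⟨hinj, hfr⟩ := hfresh
  intro G' hval
  obtain ⟨hGG', hg', htr⟩ := hval
  set Q := cruc P 𝒞 G frz with hQ
  suffices key : ∀ μ : Mapping, mdom μ = bgpVars Q → applyBGP μ Q ⊆ G' →
      applyBGP μ Q ⊆ G by
    ext μ
    constructor
    · rintro ⟨hdom, hsub⟩; exact ⟨hdom, key μ hdom hsub⟩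
    · rintro ⟨hdom, hsub⟩; exact ⟨hdom, hsub.trans hGG'⟩
  intro μ hdom hsub
  -- variables of any triple in Q are in the domain of μ
  have hvarQ : ∀ s ∈ Q, tpVars s ⊆ mdom μ := by
    intro s hs x hx
    rw [hdom]
    exact Set.mem_biUnion hs hx
  -- constants of P are not frozen constants
  have hfr2 : ∀ x, frz x ∉ bgpConsts G ∧ frz x ∉ bgpConsts P ∧
      frz x ∉ ⋃ C ∈ 𝒞, bgpConsts C.pat := by
    intro x
    have h := hfr x
    simp only [Set.mem_union, not_or] at h
    exact ⟨h.1.1, h.1.2, h.2⟩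
  have hcP : ∀ s ∈ P, ∀ a ∈ tpConsts s, ∀ x, frz x ≠ a := by
    intro s hs a ha x hxa
    exact (hfr2 x).2.1 (hxa ▸ Set.mem_biUnion hs ha)
  -- μ maps frozen triples of Q back correctly
  have hfrQ : ∀ s ∈ Q, unfrTP frz μ (applyTP (freezeMap frz) s) = applyTP μ s := by
    intro s hs
    exact unfrTP_freeze frz μ hinj s (hvarQ s hs) (hcP s hs.1)
  rintro _ ⟨t, ht, rfl⟩
  obtain ⟨htP, htT⟩ := ht
  -- unpack the transfer membership
  simp only [transfer, constructQ, Set.mem_iUnion] at htT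
  obtain ⟨C, hC, ν, hν, hmem⟩ := htT
  obtain ⟨hνdom, hνsub⟩ := hν
  -- the unfrozen mapping
  set ν' : Mapping := fun x => (ν x).map (unfr frz μ) with hν'
  have hνdom' : mdom ν' = bgpVars C.pat := by
    rw [← hνdom]
    ext x
    simp [mdom, hν', Option.map_eq_none_iff]
  have hcC : ∀ w ∈ C.pat, ∀ a ∈ tpConsts w, ∀ x, frz x ≠ a := by
    intro w hw a ha x hxa
    exact (hfr2 x).2.2 (hxa ▸ Set.mem_biUnion hC (Set.mem_biUnion hw ha))
  have hcG : ∀ u ∈ G, ∀ a ∈ tpConsts u, ∀ x, frz x ≠ a := by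
    intro u hu a ha x hxa
    exact (hfr2 x).1 (hxa ▸ Set.mem_biUnion hu ha)
  -- every triple matched into the frozen part comes from Q
  have hQmem : ∀ s ∈ P, applyTP (freezeMap frz) s ∈ applyBGP ν C.pat → s ∈ Q := by
    intro s hs hmem'
    refine ⟨hs, ?_⟩
    simp only [transfer, constructQ, Set.mem_iUnion]
    exact ⟨C, hC, ν, ⟨hνdom, hνsub⟩, hmem'⟩
  -- key: image of a matched triple under unfreezing lies in G'
  have himg : ∀ w ∈ C.pat, applyTP ν' w ∈ G' := by
    intro w hw
    have heq : applyTP ν' w = unfrTP frz μ (applyTP ν w) :=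
      (unfrTP_apply frz μ ν w (hcC w hw)).symm
    have hin : applyTP ν w ∈ applyBGP (freezeMap frz) P ∪ G :=
      hνsub (Set.mem_image_of_mem _ hw)
    rcases hin with hin | hin
    · obtain ⟨s, hsP, hse⟩ := hin
      have hsQ : s ∈ Q := hQmem s hsP (by rw [hse]; exact Set.mem_image_of_mem _ hw)
      rw [heq, ← hse, hfrQ s hsQ]
      exact hsub (Set.mem_image_of_mem _ hsQ)
    · rw [heq, unfrTP_ground frz μ _ (hg _ hin) (hcG _ hin)]
      exact hGG' hin
  -- μ t is produced by the construct query of C over G'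
  have hmem' : applyTP μ t ∈ transfer 𝒞 G' := by
    simp only [transfer, constructQ, Set.mem_iUnion]
    refine ⟨C, hC, ν', ⟨hνdom', ?_⟩, ?_⟩
    · rintro _ ⟨w, hw, rfl⟩; exact himg w hw
    · obtain ⟨w, hw, hwe⟩ := id hmem
      refine ⟨w, hw, ?_⟩
      rw [← unfrTP_apply frz μ ν w (hcC w hw), hwe, hfrQ t ⟨htP, ?_⟩]
      simp only [transfer, constructQ, Set.mem_iUnion]
      exact ⟨C, hC, ν, ⟨hνdom, hνsub⟩, hmem⟩
  exact htr hmem'
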